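/- Let X be an SCA(t!; t, v), let 0 < a < t, and let m_0, …, m_a be non-negative integers summing to v − a. Then, summed over all the arrays in C_a(X), there are exactly t! rows whose multiplicity vector is (m_0, …, m_a). -/

import Mathlib

/-- A permutation `π` of `[v]` covers a sequence `s` of distinct elements if the
elements appear in order in `π`, i.e. `π⁻¹(s i) < π⁻¹(s j)` for `i < j`. -/
def SeqCovers {v t : ℕ} (π : Equiv.Perm (Fin v)) (s : Fin t → Fin v) : Prop :=
  ∀ i j : Fin t, i < j → π.symm (s i) < π.symm (s j)

instance {v t : ℕ} (s : Fin t → Fin v) :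
    DecidablePred fun π : Equiv.Perm (Fin v) => SeqCovers π s := fun π => by
  unfold SeqCovers; infer_instance

/-- `X` is a sequence covering array SCA(N; t, v): a set of `N` permutations of `[v]`
such that every sequence of `t` distinct elements of `[v]` is covered by at least one. -/
def IsSCA (N t v : ℕ) (X : Finset (Equiv.Perm (Fin v))) : Prop :=
  X.card = N ∧ ∀ s : Fin t → Fin v, Function.Injective s → ∃ π ∈ X, SeqCovers π s

/-- `μ(T)` for a `t`-way interaction with symbol vector `ν`: the product over symbols `σ`
of `|τ_σ(T)|!` where `τ_σ(T)` is the set of positions carrying symbol `σ`. -/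
def mu {w t : ℕ} (ν : Fin t → Fin w) : ℕ :=
  ∏ σ : Fin w, Nat.factorial (Finset.univ.filter fun i => ν i = σ).card

/-- The number of rows of `C` covering the interaction given by distinct columns `c i`
and symbols `ν i`. -/
def CoversCount {κ : Type} {w t : ℕ}
    (C : Multiset (κ → Fin w)) (c : Fin t → κ) (ν : Fin t → Fin w) : ℕ :=
  C.countP fun ρ => ∀ i, ρ (c i) = ν i

/-- `C` is an excess coverage array CA_X(N; t, k, v): an `N × k` array (multiset of rows)
over `[v]` in which every `t`-way interaction `T` is covered by at least `μ(T)` rows. -/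
def IsCAX (N t k v : ℕ) (C : Multiset (Fin k → Fin v)) : Prop :=
  Multiset.card C = N ∧
  ∀ c : Fin t → Fin k, Function.Injective c →
    ∀ ν : Fin t → Fin v, mu ν ≤ CoversCount C c ν

/-- The entry of the constructed array in the row of permutation `π` and column `ν`:
the number of symbols of `A = range u` that precede `ν` in `π`. -/
def ConstrEntry {v a : ℕ} (π : Equiv.Perm (Fin v)) (u : Fin a → Fin v) (ν : Fin v) :
    Fin (a + 1) :=
  ⟨(Finset.univ.filter fun i : Fin a => π.symm (u i) < π.symm ν).card,
    Nat.lt_succ_of_le (le_trans (Finset.card_filter_le _ _) (by simp))⟩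

/-- The array of Construction 1 determined by the ordering `u` of an `a`-set `A ⊆ [v]`:
rows are indexed by the permutations of `X` covering `u`, columns by `[v] ∖ A`, and the
entry in row `ρ`, column `ν` is the number of symbols of `A` preceding `ν` in `ρ`.
The multiset `C_a(X)` consists of these arrays over all injective `u : Fin a → Fin v`. -/
def ConstrArray {v a : ℕ} (X : Finset (Equiv.Perm (Fin v))) (u : Fin a → Fin v) :
    Multiset ({ν : Fin v // ∀ i, u i ≠ ν} → Fin (a + 1)) :=
  (X.filter fun π => SeqCovers π u).val.map fun π ν => ConstrEntry π u ν.1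

def cntN (v a : ℕ) (g : ℕ → ℕ) (k : ℕ) : ℕ :=
  ((Finset.range v).filter fun n =>
    (∀ i < a, g i ≠ n) ∧ ((Finset.range a).filter fun i => g i < n).card = k).card

lemma core_count (v a : ℕ) (g : ℕ → ℕ)
    (hmono : ∀ i j, i < j → j < a → g i < g j)
    (hlt : ∀ i, i < a → g i < v) (k : ℕ) (hk : k ≤ a) :
    cntN v a g k = (if k < a then g k else v) - (if k = 0 then 0 else g (k-1) + 1) := by
  have hmole : ∀ i j, i ≤ j → j < a → g i ≤ g j := by
    intro i j hij hja
    rcases Nat.lt_or_ge i j with h | h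
    · exact le_of_lt (hmono _ _ h hja)
    · have : i = j := by omega
      rw [this]
  have hset : ((Finset.range v).filter fun n =>
      (∀ i < a, g i ≠ n) ∧ ((Finset.range a).filter fun i => g i < n).card = k)
      = Finset.Ico (if k = 0 then 0 else g (k-1) + 1) (if k < a then g k else v) := by
    ext n
    simp only [Finset.mem_filter, Finset.mem_range, Finset.mem_Ico]
    constructor
    · rintro ⟨hnv, hne, hcard⟩
      constructor
      · split_ifs with h0
        · omega
        · by_contra hc
          push_neg at hc
          have hsub : ((Finset.range a).filter fun i => g i < n) ⊆ Finset.range (k-1) := by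
            intro i hi
            simp only [Finset.mem_filter, Finset.mem_range] at hi ⊢
            by_contra hik
            push_neg at hik
            have h1 : g (k-1) ≤ g i := hmole _ _ (by omega) hi.1
            omega
          have := Finset.card_le_card hsub
          rw [hcard, Finset.card_range] at this
          omega
      · split_ifs with hka
        · by_contra hc
          push_neg at hc
          have hlt2 : g k < n := lt_of_le_of_ne hc (hne k hka)
          have hsub : Finset.range (k+1) ⊆ (Finset.range a).filter fun i => g i < n := by
            intro i hi
            simp only [Finset.mem_range] at hi
            simp only [Finset.mem_filter, Finset.mem_range]
            refine ⟨by omega, ?_⟩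
            have h1 : g i ≤ g k := hmole _ _ (by omega) hka
            omega
          have := Finset.card_le_card hsub
          rw [hcard, Finset.card_range] at this
          omega
        · exact hnv
    · rintro ⟨hlo, hhi⟩
      have hnv : n < v := by
        split_ifs at hhi with hka
        · exact lt_trans hhi (hlt k hka)
        · exact hhi
      refine ⟨hnv, ?_, ?_⟩
      · intro i hia
        rcases Nat.lt_or_ge i k with h | h
        · have hk0 : k ≠ 0 := by omega
          rw [if_neg hk0] at hlo
          have h1 : g i ≤ g (k-1) := hmole _ _ (by omega) (by omega)
          omega
        · have hka : k < a := by omega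
          rw [if_pos hka] at hhi
          have h1 : g k ≤ g i := hmole _ _ h hia
          omega
      · have heq : ((Finset.range a).filter fun i => g i < n) = Finset.range k := by
          ext i
          simp only [Finset.mem_filter, Finset.mem_range]
          constructor
          · rintro ⟨hia, hgi⟩
            by_contra hik
            push_neg at hik
            have hka : k < a := by omega
            rw [if_pos hka] at hhi
            have h1 : g k ≤ g i := hmole _ _ hik hia
            omega
          · intro hik
            have hk0 : k ≠ 0 := by omega
            rw [if_neg hk0] at hlo
            have h1 : g i ≤ g (k-1) := hmole _ _ (by omega) (by omega)
            exact ⟨by omega, by omega⟩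
        rw [heq, Finset.card_range]
  rw [cntN, hset, Nat.card_Ico]

lemma finCardAux (a : ℕ) (p : ℕ → Prop) [DecidablePred p] :
    (Finset.univ.filter fun i : Fin a => p i.val).card
      = ((Finset.range a).filter p).card := by
  rw [Finset.card_filter, Finset.card_filter]
  exact Fin.sum_univ_eq_sum_range (fun i => if p i then 1 else 0) a

lemma entry_card {v a : ℕ} (π : Equiv.Perm (Fin v)) (u : Fin a → Fin v)
    (g : ℕ → ℕ) (hg : ∀ i : Fin a, g i.val = ((π.symm (u i)) : ℕ)) (ν : Fin v) :
    ((ConstrEntry π u ν) : ℕ) = ((Finset.range a).filter fun i => g i < (π.symm ν : ℕ)).card := by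
  have h1 : ((ConstrEntry π u ν) : ℕ)
      = (Finset.univ.filter fun i : Fin a => g i.val < (π.symm ν : ℕ)).card := by
    show (Finset.univ.filter fun i : Fin a => π.symm (u i) < π.symm ν).card = _
    congr 1
    apply Finset.filter_congr
    intro i _
    rw [Fin.lt_def, hg i]
  rw [h1, finCardAux a (fun j => g j < (π.symm ν : ℕ))]

lemma bridge {v a : ℕ} (π : Equiv.Perm (Fin v)) (u : Fin a → Fin v)
    (g : ℕ → ℕ) (hg : ∀ i : Fin a, g i.val = ((π.symm (u i)) : ℕ)) (k : Fin (a+1)) :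
    (Finset.univ.filter fun νc : {ν : Fin v // ∀ i, u i ≠ ν} => ConstrEntry π u νc.1 = k).card
      = cntN v a g k.val := by
  rw [cntN]
  apply Finset.card_bij (fun νc _ => ((π.symm νc.1) : ℕ))
  · intro νc hνc
    simp only [Finset.mem_filter, Finset.mem_univ, true_and] at hνc
    simp only [Finset.mem_filter, Finset.mem_range]
    refine ⟨(π.symm νc.1).isLt, ?_, ?_⟩
    · intro i hia hgi
      apply νc.2 ⟨i, hia⟩
      apply π.symm.injective
      apply Fin.val_injective
      rw [← hg ⟨i, hia⟩]
      exact hgi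
    · rw [← entry_card π u g hg, hνc]
  · intro ν1 h1 ν2 h2 hval
    apply Subtype.ext
    exact π.symm.injective (Fin.val_injective hval)
  · intro n hn
    simp only [Finset.mem_filter, Finset.mem_range] at hn
    obtain ⟨hnv, hne, hcard⟩ := hn
    have hν2 : ∀ i, u i ≠ π ⟨n, hnv⟩ := by
      intro i hui
      apply hne i.val i.isLt
      rw [hg i, hui, Equiv.symm_apply_apply]
    refine ⟨⟨π ⟨n, hnv⟩, hν2⟩, ?_, ?_⟩
    · simp only [Finset.mem_filter, Finset.mem_univ, true_and]
      apply Fin.val_injective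
      rw [entry_card π u g hg, Equiv.symm_apply_apply]
      exact hcard
    · simp [Equiv.symm_apply_apply]

lemma cov_iff {v a : ℕ} (π : Equiv.Perm (Fin v)) (u : Fin a → Fin v)
    (g : ℕ → ℕ) (hg : ∀ i : Fin a, g i.val = ((π.symm (u i)) : ℕ)) :
    SeqCovers π u ↔ ∀ i j, i < j → j < a → g i < g j := by
  constructor
  · intro h i j hij hja
    have := h ⟨i, by omega⟩ ⟨j, hja⟩ (by simp [Fin.lt_def]; omega)
    rw [Fin.lt_def] at this
    rwa [← hg ⟨i, by omega⟩, ← hg ⟨j, hja⟩] at this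
  · intro h i j hij
    rw [Fin.lt_def]
    rw [← hg i, ← hg j]
    exact h i.val j.val (by rwa [Fin.lt_def] at hij) j.isLt

lemma key_count {v a : ℕ} (ha0 : 0 < a) (hav : a < v) (m : Fin (a+1) → ℕ)
    (hm : ∑ i, m i = v - a) (π : Equiv.Perm (Fin v)) :
    (Finset.univ.filter fun u : Fin a → Fin v =>
      Function.Injective u ∧
        ((∀ i : Fin (a+1), (Finset.univ.filter fun νc : {ν : Fin v // ∀ i, u i ≠ ν} =>
          ConstrEntry π u νc.1 = i).card = m i) ∧ SeqCovers π u)).card = 1 := by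
  classical
  set mN : ℕ → ℕ := fun i => if h : i < a + 1 then m ⟨i, h⟩ else 0 with hmN
  set P' : ℕ → ℕ := fun j => j + ∑ i ∈ Finset.range (j+1), mN i with hP'
  have hmNval : ∀ i : Fin (a+1), mN i.val = m i := by
    intro i; simp [hmN, i.isLt]; intro h; have := i.isLt; omega
  have hsum : ∑ i ∈ Finset.range (a+1), mN i = v - a := by
    rw [← Fin.sum_univ_eq_sum_range mN (a+1)]
    rw [show (∑ i : Fin (a+1), mN i.val) = ∑ i : Fin (a+1), m i from
      Finset.sum_congr rfl fun i _ => hmNval i]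
    exact hm
  have hsumle : ∀ j, j ≤ a + 1 → ∑ i ∈ Finset.range j, mN i ≤ v - a := by
    intro j hj
    rw [← hsum]
    exact Finset.sum_le_sum_of_subset (Finset.range_subset_range.mpr hj)
  have hP'mono : ∀ i j, i < j → P' i < P' j := by
    intro i j hij
    have : ∑ x ∈ Finset.range (i+1), mN x ≤ ∑ x ∈ Finset.range (j+1), mN x :=
      Finset.sum_le_sum_of_subset (Finset.range_subset_range.mpr (by omega))
    simp only [hP']
    omega
  have hP'lt : ∀ j, j < a → P' j < v := by
    intro j hj
    have h1 := hsumle (j+1) (by omega)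
    simp only [hP']
    omega
  have hP'succ : ∀ j, P' (j+1) = P' j + 1 + mN (j+1) := by
    intro j
    simp only [hP', Finset.sum_range_succ _ (j+1)]
    omega
  have hP'0 : P' 0 = mN 0 := by simp [hP']
  have hP'a : P' (a-1) + 1 + mN a = v := by
    have h1 := hP'succ (a-1)
    have h2 : a - 1 + 1 = a := by omega
    rw [h2] at h1
    have h3 : P' a = a + (v - a) := by simp only [hP', hsum]
    omega
  set u₀ : Fin a → Fin v := fun j => π ⟨P' j.val, hP'lt _ j.isLt⟩ with hu₀
  have hg₀ : ∀ i : Fin a, P' i.val = ((π.symm (u₀ i)) : ℕ) := by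
    intro i; simp [hu₀]
  have hcnt : ∀ k, k ≤ a → cntN v a P' k = mN k := by
    intro k hk
    rw [core_count v a P' (fun i j hij _ => hP'mono i j hij) hP'lt k hk]
    rcases Nat.eq_zero_or_pos k with hk0 | hk0
    · subst hk0
      rw [if_pos ha0, if_pos rfl, hP'0]
      omega
    · rcases Nat.lt_or_ge k a with hka | hka
      · rw [if_pos hka, if_neg (by omega)]
        have h1 := hP'succ (k-1)
        have h2 : k - 1 + 1 = k := by omega
        rw [h2] at h1
        have := hP'mono (k-1) k (by omega)
        omega
      · have hkeq : k = a := by omega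
        subst hkeq
        rw [if_neg (by omega), if_neg (by omega)]
        omega
  rw [Finset.card_eq_one]
  refine ⟨u₀, Finset.eq_singleton_iff_unique_mem.mpr ⟨?_, ?_⟩⟩
  · simp only [Finset.mem_filter, Finset.mem_univ, true_and]
    refine ⟨?_, ?_, ?_⟩
    · intro i j hij
      have h1 : (⟨P' i.val, hP'lt _ i.isLt⟩ : Fin v) = ⟨P' j.val, hP'lt _ j.isLt⟩ :=
        π.injective hij
      have h2 : P' i.val = P' j.val := by
        simpa using congrArg Fin.val h1
      by_contra hne
      rcases Nat.lt_or_ge i.val j.val with h | h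
      · have := hP'mono i.val j.val h; omega
      · have hne' : i.val ≠ j.val := fun hc => hne (Fin.val_injective hc)
        have := hP'mono j.val i.val (by omega); omega
    · intro k
      rw [bridge π u₀ P' hg₀ k, hcnt k.val (by omega), hmNval k]
    · exact (cov_iff π u₀ P' hg₀).mpr (fun i j hij _ => hP'mono i j hij)
  · intro u hu
    simp only [Finset.mem_filter, Finset.mem_univ, true_and] at hu
    obtain ⟨hinj, hQ, hcov⟩ := hu
    set g : ℕ → ℕ := fun i => if h : i < a then ((π.symm (u ⟨i, h⟩)) : ℕ) else v + i with hgdef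
    have hg : ∀ i : Fin a, g i.val = ((π.symm (u i)) : ℕ) := by
      intro i; simp [hgdef, i.isLt]
    have hmono := (cov_iff π u g hg).mp hcov
    have hglt : ∀ i, i < a → g i < v := by
      intro i hi
      rw [show i = (⟨i, hi⟩ : Fin a).val from rfl, hg ⟨i, hi⟩]
      exact (π.symm (u ⟨i, hi⟩)).isLt
    have hcg : ∀ k, (hk : k ≤ a) → cntN v a g k = mN k := by
      intro k hk
      have h1 := bridge π u g hg ⟨k, by omega⟩
      simp only at h1
      rw [← h1, hQ ⟨k, by omega⟩]
      exact (hmNval ⟨k, by omega⟩).symm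
    have hgP : ∀ j, j < a → g j = P' j := by
      intro j
      induction j with
      | zero =>
        intro hj
        have h1 := hcg 0 (by omega)
        rw [core_count v a g hmono hglt 0 (by omega), if_pos ha0, if_pos rfl] at h1
        omega
      | succ j ih =>
        intro hj
        have hjj := ih (by omega)
        have h1 := hcg (j+1) (by omega)
        rw [core_count v a g hmono hglt (j+1) (by omega), if_pos hj,
          if_neg (Nat.succ_ne_zero j)] at h1
        simp only [Nat.add_sub_cancel] at h1
        have h2 := hmono j (j+1) (by omega) hj
        have h3 := hP'succ j
        omega
    funext i
    apply π.symm.injective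
    apply Fin.val_injective
    rw [← hg i, ← hg₀ i]
    exact hgP i.val i.isLt

/-- If `X` is an SCA(t!; t, v), `0 < a < t`, and `m_0, …, m_a` are
non-negative integers summing to `v − a`, then across all arrays in `C_a(X)` there are
exactly `t!` rows with multiplicity vector `(m_0, …, m_a)` (the row `ρ` has multiplicity
vector `m` if each symbol `i` appears exactly `m i` times in `ρ`). -/
theorem constrArray_multiplicity_vectors (t v a : ℕ) (htv : t ≤ v)
    (ha0 : 0 < a) (hat : a < t)
    (X : Finset (Equiv.Perm (Fin v))) (hX : IsSCA (Nat.factorial t) t v X)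
    (m : Fin (a + 1) → ℕ) (hm : ∑ i, m i = v - a) :
    ∑ u ∈ Finset.univ.filter (fun u : Fin a → Fin v => Function.Injective u),
      Multiset.countP
        (fun ρ : {ν : Fin v // ∀ i, u i ≠ ν} → Fin (a + 1) =>
          ∀ i : Fin (a + 1), (Finset.univ.filter fun νc => ρ νc = i).card = m i)
        (ConstrArray X u)
      = Nat.factorial t := by
  classical
  obtain ⟨hcard, -⟩ := hX
  have hav : a < v := lt_of_lt_of_le hat htv
  have step1 : ∀ u : Fin a → Fin v,
      Multiset.countP
        (fun ρ : {ν : Fin v // ∀ i, u i ≠ ν} → Fin (a + 1) =>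
          ∀ i : Fin (a + 1), (Finset.univ.filter fun νc => ρ νc = i).card = m i)
        (ConstrArray X u)
      = ∑ π ∈ X, if ((∀ i : Fin (a+1),
            (Finset.univ.filter fun νc : {ν : Fin v // ∀ i, u i ≠ ν} =>
              ConstrEntry π u νc.1 = i).card = m i) ∧ SeqCovers π u) then 1 else 0 := by
    intro u
    rw [ConstrArray, Multiset.countP_map, Finset.filter_val, Multiset.filter_filter,
      ← Finset.filter_val, ← Finset.card_def, Finset.card_filter]
  rw [Finset.sum_congr rfl fun u _ => step1 u, Finset.sum_comm]
  have step2 : ∀ π ∈ X,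
      (∑ u ∈ Finset.univ.filter (fun u : Fin a → Fin v => Function.Injective u),
        if ((∀ i : Fin (a+1),
            (Finset.univ.filter fun νc : {ν : Fin v // ∀ i, u i ≠ ν} =>
              ConstrEntry π u νc.1 = i).card = m i) ∧ SeqCovers π u) then 1 else 0) = 1 := by
    intro π _
    rw [← Finset.card_filter, Finset.filter_filter]
    exact key_count ha0 hav m hm π
  rw [Finset.sum_congr rfl step2, Finset.sum_const, smul_eq_mul, mul_one, hcard]
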